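/- Let X be a random variable uniformly distributed on {0, 1, ..., n-1}. Then the cumulant generating function of X satisfies: for r ≥ 1, the r-th cumulant of X equals (B_r / r) * (n^r - 1), where B_r is the r-th Bernoulli number. -/

import Mathlib

open ProbabilityTheory

/-- The `r`-th cumulant of a real random variable `X` on `(Ω, μ)`, defined as the
`r`-th coefficient (times `r!`) of the Taylor expansion of the cumulant generating
function `t ↦ log E[e^{tX}]` at `0`. -/
noncomputable def nthCumulant {Ω : Type*} [MeasurableSpace Ω]
    (r : ℕ) (X : Ω → ℝ) (μ : MeasureTheory.Measure Ω) : ℝ :=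
  iteratedDeriv r (fun t => cgf X μ t) 0

namespace CumulantAux

open Real MeasureTheory Filter Finset FormalMultilinearSeries
open scoped ContDiff Nat

/-- Coefficients of the power series of `(e^t - 1)/t`. -/
noncomputable def c : ℕ → ℝ := fun k => (((k + 1)! : ℝ))⁻¹

lemma c_ne (k : ℕ) : c k ≠ 0 := by
  simp [c, Nat.factorial_ne_zero]

noncomputable def p : FormalMultilinearSeries ℝ ℝ ℝ := FormalMultilinearSeries.ofScalars ℝ c

lemma radius_top : p.radius = ⊤ := by
  apply ofScalars_radius_eq_top_of_tendsto
  · exact Filter.Eventually.of_forall fun n => c_ne n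
  · have h1 : (fun n : ℕ => ‖c n.succ‖ / ‖c n‖) = fun n : ℕ => ((n : ℝ) + 2)⁻¹ := by
      funext n
      have h2 : ((n + 2)! : ℝ) = ((n : ℝ) + 2) * ((n + 1)! : ℝ) := by
        rw [show n + 2 = (n + 1) + 1 from rfl, Nat.factorial_succ]
        push_cast; ring
      rw [c, c, norm_inv, norm_inv, Real.norm_natCast, Real.norm_natCast]
      rw [show n.succ + 1 = n + 2 from rfl, h2]
      rw [div_eq_mul_inv, mul_inv, inv_inv]
      have : ((n + 1)! : ℝ) ≠ 0 := by positivity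
      field_simp
    rw [h1]
    exact tendsto_inv_atTop_zero.comp
      (tendsto_atTop_add_const_right _ 2 tendsto_natCast_atTop_atTop)

/-- The function `(e^t-1)/t`, defined as a power series sum. -/
noncomputable def E : ℝ → ℝ := p.sum

lemma hball : HasFPowerSeriesOnBall E p 0 ⊤ := by
  have := p.hasFPowerSeriesOnBall (by rw [radius_top]; exact ENNReal.zero_lt_top)
  rwa [radius_top] at this

lemma hasSum_E (t : ℝ) : HasSum (fun k => c k * t ^ k) (E t) := by
  have h := hball.hasSum (y := t) (by simp)
  simp only [zero_add] at h
  convert h using 2 with k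
  · rfl
  rw [p, FormalMultilinearSeries.ofScalars_apply_eq, smul_eq_mul]

lemma key (t : ℝ) : t * E t = Real.exp t - 1 := by
  have h1 : HasSum (fun k => t * (c k * t ^ k)) (t * E t) := (hasSum_E t).mul_left t
  have hexp : HasSum (fun n : ℕ => t ^ n / (n ! : ℝ)) (Real.exp t) := by
    have := NormedSpace.expSeries_div_hasSum_exp (𝔸 := ℝ) t
    rwa [← Real.exp_eq_exp_ℝ] at this
  have h2 : HasSum (fun k : ℕ => t ^ (k + 1) / ((k + 1)! : ℝ)) (Real.exp t - 1) := by
    refine (hasSum_nat_add_iff (f := fun n : ℕ => t ^ n / (n ! : ℝ)) 1).mpr ?_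
    simpa using hexp
  have heq : (fun k => t * (c k * t ^ k)) = fun k : ℕ => t ^ (k + 1) / ((k + 1)! : ℝ) := by
    funext k
    rw [c, div_eq_mul_inv, pow_succ]
    ring
  rw [heq] at h1
  exact h1.unique h2

lemma E_zero : E 0 = 1 := by
  have h := hasSum_E 0
  have : (fun k => c k * (0 : ℝ) ^ k) = fun k => if k = 0 then (1 : ℝ) else 0 := by
    funext k
    cases k with
    | zero => simp [c]
    | succ m => simp
  rw [this] at h
  have := h.tsum_eq
  rw [tsum_ite_eq] at this
  exact this.symm

lemma E_pos (t : ℝ) : 0 < E t := by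
  rcases lt_trichotomy t 0 with h | h | h
  · have hk : E t = (Real.exp t - 1) / t := by
      rw [eq_div_iff h.ne, mul_comm]
      exact key t
    rw [hk]
    apply div_pos_of_neg_of_neg _ h
    simpa using Real.exp_lt_one_iff.mpr h
  · rw [h, E_zero]; norm_num
  · have hk : E t = (Real.exp t - 1) / t := by
      rw [eq_div_iff h.ne', mul_comm]
      exact key t
    rw [hk]
    apply div_pos _ h
    simpa using Real.one_lt_exp_iff.mpr h
  
lemma E_contDiff : ContDiff ℝ ∞ E := by
  apply AnalyticOnNhd.contDiff
  intro x _
  exact hball.analyticAt_of_mem (by simp)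

lemma iteratedDeriv_E (m : ℕ) : iteratedDeriv m E 0 = ((m : ℝ) + 1)⁻¹ := by
  have h := hball.factorial_smul (y := (1 : ℝ)) m
  rw [iteratedDeriv_eq_iteratedFDeriv, ← h, p,
    FormalMultilinearSeries.ofScalars_apply_eq, one_pow, smul_eq_mul, mul_one,
    c, nsmul_eq_mul, Nat.factorial_succ]
  push_cast
  rw [mul_inv]
  have hm : (m ! : ℝ) ≠ 0 := by positivity
  field_simp

noncomputable def g : ℝ → ℝ := fun t => Real.log (E t)

lemma g_contDiff : ContDiff ℝ ∞ g := by
  rw [contDiff_iff_contDiffAt]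
  intro x
  exact (E_contDiff.contDiffAt).log (E_pos x).ne'

lemma deriv_g_mul (t : ℝ) : deriv g t * E t = deriv E t := by
  have hE' : HasDerivAt E (deriv E t) t :=
    ((E_contDiff.differentiable (by simp)) t).hasDerivAt
  have hg' : HasDerivAt g (deriv E t / E t) t := hE'.log (E_pos t).ne'
  rw [hg'.deriv, div_mul_cancel₀ _ (E_pos t).ne']

lemma pascal_sum (m : ℕ) (a b : ℕ → ℝ) :
    ∑ k ∈ range (m + 1), (m.choose k : ℝ) * a (k + 1) * b (m - k)
      + ∑ k ∈ range (m + 1), (m.choose k : ℝ) * a k * b (m + 1 - k)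
    = ∑ k ∈ range (m + 2), ((m + 1).choose k : ℝ) * a k * b (m + 1 - k) := by
  rw [Finset.sum_range_succ' (fun k => ((m + 1).choose k : ℝ) * a k * b (m + 1 - k)) (m + 1)]
  simp only [Nat.succ_sub_succ, Nat.choose_zero_right, Nat.cast_one, one_mul, Nat.sub_zero]
  have hc : ∀ k, ((m + 1).choose (k + 1) : ℝ) = (m.choose k : ℝ) + (m.choose (k + 1) : ℝ) := by
    intro k
    rw [Nat.choose_succ_succ]
    push_cast
    ring
  have hsplit : ∑ k ∈ range (m + 1), ((m + 1).choose (k + 1) : ℝ) * a (k + 1) * b (m - k)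
      = ∑ k ∈ range (m + 1), (m.choose k : ℝ) * a (k + 1) * b (m - k)
        + ∑ k ∈ range (m + 1), (m.choose (k + 1) : ℝ) * a (k + 1) * b (m - k) := by
    rw [← Finset.sum_add_distrib]
    apply Finset.sum_congr rfl
    intro k _
    rw [hc k]; ring
  rw [hsplit]
  have h2 : ∑ k ∈ range (m + 1), (m.choose k : ℝ) * a k * b (m + 1 - k)
      = ∑ k ∈ range (m + 1), (m.choose (k + 1) : ℝ) * a (k + 1) * b (m - k) + a 0 * b (m + 1) := by
    rw [Finset.sum_range_succ' (fun k => (m.choose k : ℝ) * a k * b (m + 1 - k)) m]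
    simp only [Nat.succ_sub_succ, Nat.choose_zero_right, Nat.cast_one, one_mul, Nat.sub_zero]
    congr 1
    rw [Finset.sum_range_succ]
    simp [Nat.choose_succ_self]
  rw [h2]
  ring

lemma leibniz (m : ℕ) : ∀ (f g : ℝ → ℝ), ContDiff ℝ ∞ f → ContDiff ℝ ∞ g → ∀ x : ℝ,
    iteratedDeriv m (fun t => f t * g t) x
      = ∑ k ∈ range (m + 1),
          (m.choose k : ℝ) * iteratedDeriv k f x * iteratedDeriv (m - k) g x := by
  induction m with
  | zero => intro f g _ _ x; simp
  | succ m ih =>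
    intro f g hf hg x
    have hf' : ContDiff ℝ ∞ (deriv f) := (contDiff_infty_iff_deriv.mp hf).2
    have hg' : ContDiff ℝ ∞ (deriv g) := (contDiff_infty_iff_deriv.mp hg).2
    have hfd : Differentiable ℝ f := hf.differentiable (by simp)
    have hgd : Differentiable ℝ g := hg.differentiable (by simp)
    have hd : deriv (fun t => f t * g t) = fun t => deriv f t * g t + f t * deriv g t := by
      funext t
      exact deriv_mul (hfd t) (hgd t)
    rw [iteratedDeriv_succ', hd]
    have hA : ContDiff ℝ ∞ (fun t => deriv f t * g t) := hf'.mul hg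
    have hB : ContDiff ℝ ∞ (fun t => f t * deriv g t) := hf.mul hg'
    have hadd : iteratedDeriv m (fun t => deriv f t * g t + f t * deriv g t) x
        = iteratedDeriv m (fun t => deriv f t * g t) x
          + iteratedDeriv m (fun t => f t * deriv g t) x := by
      simp only [← iteratedDerivWithin_univ]
      exact iteratedDerivWithin_add (Set.mem_univ x) uniqueDiffOn_univ
        (hA.contDiffWithinAt.of_le (by exact_mod_cast (le_top : (m : ℕ∞) ≤ ⊤)))
        (hB.contDiffWithinAt.of_le (by exact_mod_cast (le_top : (m : ℕ∞) ≤ ⊤)))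
    rw [hadd, ih _ _ hf' hg x, ih _ _ hf hg' x]
    have e1 : ∑ k ∈ range (m + 1),
          (m.choose k : ℝ) * iteratedDeriv k (deriv f) x * iteratedDeriv (m - k) g x
        = ∑ k ∈ range (m + 1),
          (m.choose k : ℝ) * iteratedDeriv (k + 1) f x * iteratedDeriv (m - k) g x := by
      apply Finset.sum_congr rfl
      intro k _
      rw [← iteratedDeriv_succ']
    have e2 : ∑ k ∈ range (m + 1),
          (m.choose k : ℝ) * iteratedDeriv k f x * iteratedDeriv (m - k) (deriv g) x
        = ∑ k ∈ range (m + 1),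
          (m.choose k : ℝ) * iteratedDeriv k f x * iteratedDeriv (m + 1 - k) g x := by
      apply Finset.sum_congr rfl
      intro k hk
      rw [← iteratedDeriv_succ', Nat.sub_add_comm (Finset.mem_range_succ_iff.mp hk)]
    rw [e1, e2]
    exact pascal_sum m (fun k => iteratedDeriv k f x) (fun j => iteratedDeriv j g x)

lemma recursion (m : ℕ) :
    ∑ k ∈ range (m + 1), (m.choose k : ℝ) * iteratedDeriv (k + 1) g 0
        * (((m - k : ℕ) : ℝ) + 1)⁻¹
      = ((m : ℝ) + 2)⁻¹ := by
  have hgd : ContDiff ℝ ∞ (deriv g) := (contDiff_infty_iff_deriv.mp g_contDiff).2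
  have hfun : (fun t => deriv g t * E t) = deriv E := funext deriv_g_mul
  have h := leibniz m (deriv g) E hgd E_contDiff 0
  rw [hfun] at h
  rw [← iteratedDeriv_succ', iteratedDeriv_E (m + 1)] at h
  have : ∑ k ∈ range (m + 1),
        (m.choose k : ℝ) * iteratedDeriv k (deriv g) 0 * iteratedDeriv (m - k) E 0
      = ∑ k ∈ range (m + 1), (m.choose k : ℝ) * iteratedDeriv (k + 1) g 0
          * (((m - k : ℕ) : ℝ) + 1)⁻¹ := by
    apply Finset.sum_congr rfl
    intro k _
    rw [← iteratedDeriv_succ', iteratedDeriv_E]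
  rw [this] at h
  rw [← h]
  push_cast
  ring_nf

lemma choose_nat_id (m k : ℕ) (hk : k ≤ m) :
    (m + 1) * ((m + 2) * m.choose k) = (k + 1) * ((m - k + 1) * (m + 2).choose (k + 1)) := by
  have A : (m + 1) * m.choose k = (m + 1).choose (k + 1) * (k + 1) :=
    Nat.add_one_mul_choose_eq m k
  have hsymm1 : (m + 1).choose (m - k) = (m + 1).choose (k + 1) := by
    have : m + 1 - (k + 1) = m - k := by omega
    rw [← this, Nat.choose_symm (by omega)]
  have B : (m + 2) * (m + 1).choose (m - k) = (m + 2).choose (m - k + 1) * (m - k + 1) :=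
    Nat.add_one_mul_choose_eq (m + 1) (m - k)
  have hsymm2 : (m + 2).choose (m - k + 1) = (m + 2).choose (k + 1) := by
    have : m + 2 - (k + 1) = m - k + 1 := by omega
    rw [← this, Nat.choose_symm (by omega)]
  calc (m + 1) * ((m + 2) * m.choose k) = (m + 2) * ((m + 1) * m.choose k) := by ring
    _ = (m + 2) * ((m + 1).choose (k + 1) * (k + 1)) := by rw [A]
    _ = (k + 1) * ((m + 2) * (m + 1).choose (m - k)) := by rw [hsymm1]; ring
    _ = (k + 1) * ((m + 2).choose (m - k + 1) * (m - k + 1)) := by rw [B]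
    _ = (k + 1) * ((m - k + 1) * (m + 2).choose (k + 1)) := by rw [hsymm2]; ring

lemma bern_sum (m : ℕ) :
    ∑ k ∈ range (m + 1), ((m + 2).choose (k + 1) : ℝ) * (bernoulli' (k + 1) : ℝ)
      = (m : ℝ) + 1 := by
  have hq : ∑ k ∈ range (m + 1), ((m + 2).choose (k + 1) : ℚ) * bernoulli' (k + 1)
      = (m : ℚ) + 1 := by
    have h := sum_bernoulli' (m + 2)
    rw [Finset.sum_range_succ' (fun k => ((m + 2).choose k : ℚ) * bernoulli' k) (m + 1)] at h
    simp only [Nat.choose_zero_right, Nat.cast_one, one_mul, bernoulli'_zero] at h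
    push_cast at h ⊢
    linarith
  have := congrArg (fun q : ℚ => (q : ℝ)) hq
  push_cast at this
  exact this

lemma bern_id (m : ℕ) :
    ∑ k ∈ range (m + 1), (m.choose k : ℝ) * ((bernoulli' (k + 1) : ℝ) / (k + 1))
        * (((m - k : ℕ) : ℝ) + 1)⁻¹
      = ((m : ℝ) + 2)⁻¹ := by
  have hterm : ∀ k ∈ range (m + 1),
      (m.choose k : ℝ) * ((bernoulli' (k + 1) : ℝ) / (k + 1)) * (((m - k : ℕ) : ℝ) + 1)⁻¹
        = ((m + 2).choose (k + 1) : ℝ) * (bernoulli' (k + 1) : ℝ)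
            * (((m : ℝ) + 1) * ((m : ℝ) + 2))⁻¹ := by
    intro k hk
    have hk' : k ≤ m := Finset.mem_range_succ_iff.mp hk
    have hc := choose_nat_id m k hk'
    have hcast : ((m : ℝ) + 1) * (((m : ℝ) + 2) * (m.choose k : ℝ))
        = ((k : ℝ) + 1) * ((((m - k : ℕ) : ℝ) + 1) * ((m + 2).choose (k + 1) : ℝ)) := by
      exact_mod_cast congrArg (fun x : ℕ => (x : ℝ)) hc
    have hdd : (m.choose k : ℝ) / (((k : ℝ) + 1) * (((m - k : ℕ) : ℝ) + 1))
        = ((m + 2).choose (k + 1) : ℝ) / (((m : ℝ) + 1) * ((m : ℝ) + 2)) := by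
      rw [div_eq_div_iff (by positivity) (by positivity)]
      linear_combination hcast
    calc (m.choose k : ℝ) * ((bernoulli' (k + 1) : ℝ) / (k + 1)) * (((m - k : ℕ) : ℝ) + 1)⁻¹
        = ((m.choose k : ℝ) / (((k : ℝ) + 1) * (((m - k : ℕ) : ℝ) + 1)))
            * (bernoulli' (k + 1) : ℝ) := by
          rw [div_eq_mul_inv, div_eq_mul_inv, mul_inv]; ring
      _ = (((m + 2).choose (k + 1) : ℝ) / (((m : ℝ) + 1) * ((m : ℝ) + 2)))
            * (bernoulli' (k + 1) : ℝ) := by rw [hdd]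
      _ = ((m + 2).choose (k + 1) : ℝ) * (bernoulli' (k + 1) : ℝ)
            * (((m : ℝ) + 1) * ((m : ℝ) + 2))⁻¹ := by
          rw [div_eq_mul_inv]; ring
  rw [Finset.sum_congr rfl hterm]
  have : ∑ k ∈ range (m + 1), ((m + 2).choose (k + 1) : ℝ) * (bernoulli' (k + 1) : ℝ)
      * (((m : ℝ) + 1) * ((m : ℝ) + 2))⁻¹
      = (∑ k ∈ range (m + 1), ((m + 2).choose (k + 1) : ℝ) * (bernoulli' (k + 1) : ℝ))
        * (((m : ℝ) + 1) * ((m : ℝ) + 2))⁻¹ := by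
    rw [Finset.sum_mul]
  rw [this, bern_sum]
  have h3 : ((m : ℝ) + 1) ≠ 0 := by positivity
  have h4 : ((m : ℝ) + 2) ≠ 0 := by positivity
  field_simp

lemma iteratedDeriv_g_zero : ∀ m : ℕ,
    iteratedDeriv (m + 1) g 0 = (bernoulli' (m + 1) : ℝ) / (m + 1) := by
  intro m
  induction m using Nat.strong_induction_on with
  | _ m ih =>
    have hrec := recursion m
    have hid := bern_id m
    have hkey : ∑ k ∈ range (m + 1), (m.choose k : ℝ) * iteratedDeriv (k + 1) g 0
          * (((m - k : ℕ) : ℝ) + 1)⁻¹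
        = ∑ k ∈ range (m + 1), (m.choose k : ℝ) * ((bernoulli' (k + 1) : ℝ) / (k + 1))
          * (((m - k : ℕ) : ℝ) + 1)⁻¹ := hrec.trans hid.symm
    rw [Finset.sum_range_succ, Finset.sum_range_succ] at hkey
    have hsame : ∑ k ∈ range m, (m.choose k : ℝ) * iteratedDeriv (k + 1) g 0
          * (((m - k : ℕ) : ℝ) + 1)⁻¹
        = ∑ k ∈ range m, (m.choose k : ℝ) * ((bernoulli' (k + 1) : ℝ) / (k + 1))
          * (((m - k : ℕ) : ℝ) + 1)⁻¹ := by
      apply Finset.sum_congr rfl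
      intro k hk
      rw [ih k (Finset.mem_range.mp hk)]
    rw [hsame] at hkey
    have hlast : (m.choose m : ℝ) * iteratedDeriv (m + 1) g 0 * (((m - m : ℕ) : ℝ) + 1)⁻¹
        = (m.choose m : ℝ) * ((bernoulli' (m + 1) : ℝ) / (m + 1)) * (((m - m : ℕ) : ℝ) + 1)⁻¹ :=
      by linarith
    simp only [Nat.choose_self, Nat.cast_one, one_mul, Nat.sub_self, Nat.cast_zero,
      zero_add, inv_one, mul_one] at hlast
    exact hlast

lemma iteratedDeriv_g (r : ℕ) (hr : 1 ≤ r) :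
    iteratedDeriv r g 0 = (bernoulli' r : ℝ) / r := by
  obtain ⟨m, rfl⟩ : ∃ m, r = m + 1 := ⟨r - 1, by omega⟩
  have := iteratedDeriv_g_zero m
  rw [this]
  push_cast
  ring

lemma sum_exp_eq (n : ℕ) (t : ℝ) :
    (∑ i ∈ range n, Real.exp (t * i)) * E t = n * E (n * t) := by
  rcases eq_or_ne t 0 with rfl | ht
  · simp [E_zero]
  · apply mul_left_cancel₀ ht
    have hterm : ∀ i : ℕ, Real.exp (t * i) = Real.exp t ^ i := by
      intro i
      rw [mul_comm, Real.exp_nat_mul]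
    calc t * ((∑ i ∈ range n, Real.exp (t * i)) * E t)
        = (∑ i ∈ range n, Real.exp t ^ i) * (t * E t) := by
          rw [Finset.sum_congr rfl fun i _ => hterm i]; ring
      _ = (∑ i ∈ range n, Real.exp t ^ i) * (Real.exp t - 1) := by rw [key]
      _ = Real.exp t ^ n - 1 := geom_sum_mul _ _
      _ = Real.exp (n * t) - 1 := by rw [← Real.exp_nat_mul, mul_comm (n : ℝ) t]
      _ = (n * t) * E (n * t) := (key _).symm
      _ = t * (n * E (n * t)) := by ring

lemma cgf_eq (n : ℕ) (hn : 0 < n) (t : ℝ) :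
    cgf (fun i : Fin n => (i : ℝ))
        (PMF.uniformOfFinset Finset.univ
          (⟨⟨0, hn⟩, Finset.mem_univ _⟩ : Finset.univ.Nonempty)).toMeasure t
      = g ((n : ℝ) * t) - g t := by
  have hn' : (n : ℝ) ≠ 0 := Nat.cast_ne_zero.mpr hn.ne'
  have hmgf : mgf (fun i : Fin n => (i : ℝ))
      (PMF.uniformOfFinset Finset.univ
        (⟨⟨0, hn⟩, Finset.mem_univ _⟩ : Finset.univ.Nonempty)).toMeasure t
      = E ((n : ℝ) * t) / E t := by
    rw [mgf, PMF.integral_eq_sum]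
    have happ : ∀ i : Fin n,
        ((PMF.uniformOfFinset Finset.univ
          (⟨⟨0, hn⟩, Finset.mem_univ _⟩ : Finset.univ.Nonempty)) i).toReal = (n : ℝ)⁻¹ := by
      intro i
      erw [PMF.uniformOfFinset_apply]
      simp [Finset.card_univ]
    simp only [happ, smul_eq_mul]
    rw [← Finset.mul_sum]
    have hsum : ∑ i : Fin n, Real.exp (t * (i : ℝ)) = ∑ i ∈ range n, Real.exp (t * i) := by
      rw [Fin.sum_univ_eq_sum_range (fun i => Real.exp (t * i)) n]
    rw [hsum]
    have hE := sum_exp_eq n t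
    have hEt := (E_pos t).ne'
    rw [eq_div_iff hEt]
    field_simp
    linarith [hE]
  rw [cgf, hmgf, Real.log_div (E_pos _).ne' (E_pos _).ne']
  rfl

end CumulantAux

theorem stmt_4 (n : ℕ) (hn : 0 < n) (r : ℕ) (hr : 1 ≤ r) :
    nthCumulant r (fun i : Fin n => (i : ℝ))
        (PMF.uniformOfFinset Finset.univ ⟨⟨0, hn⟩, Finset.mem_univ _⟩).toMeasure
      = ((bernoulli' r : ℝ) / r) * ((n : ℝ) ^ r - 1) := by
  open CumulantAux in
  have hfun : (fun t => cgf (fun i : Fin n => (i : ℝ))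
      (PMF.uniformOfFinset Finset.univ ⟨⟨0, hn⟩, Finset.mem_univ _⟩).toMeasure t)
      = fun t => CumulantAux.g ((n : ℝ) * t) - CumulantAux.g t :=
    funext (CumulantAux.cgf_eq n hn)
  rw [nthCumulant, hfun]
  have hgC : ContDiff ℝ r CumulantAux.g :=
    CumulantAux.g_contDiff.of_le (by exact_mod_cast le_top)
  have hgnC : ContDiff ℝ r (fun t : ℝ => CumulantAux.g ((n : ℝ) * t)) :=
    hgC.comp (contDiff_const.mul contDiff_id)
  have hsub : iteratedDeriv r (fun t => CumulantAux.g ((n : ℝ) * t) - CumulantAux.g t) 0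
      = iteratedDeriv r (fun t : ℝ => CumulantAux.g ((n : ℝ) * t)) 0
        - iteratedDeriv r CumulantAux.g 0 := by
    simp only [← iteratedDerivWithin_univ]
    exact iteratedDerivWithin_sub (Set.mem_univ 0) uniqueDiffOn_univ
      hgnC.contDiffWithinAt hgC.contDiffWithinAt
  rw [hsub]
  have hmul := iteratedDeriv_comp_const_mul hgC ((n : ℝ))
  rw [congrFun hmul 0]
  rw [mul_zero, CumulantAux.iteratedDeriv_g r hr]
  ring
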